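/- If f is (h-s)₂-convex in the second sense and h(1/2) > 0, then (1/(2 h(1/2)^s)) f((a+b)/2) ≤ (1/(b-a)) ∫_a^b f(x) dx ≤ ((f(a)+f(b))/2) ∫_0^1 [h(t)^s + h(1-t)^s] dt. -/

import Mathlib

open MeasureTheory

theorem hs2_convex_hadamard_both (h : ℝ → ℝ) (s : ℝ) (f : ℝ → ℝ) (a b : ℝ)
    (hh : ∀ t ∈ Set.Icc (0:ℝ) 1, 0 ≤ h t) (hhalf : 0 < h (1/2))
    (hs : s ∈ Set.Ioc (0:ℝ) 1)
    (hf : ∀ x ∈ Set.Ici (0:ℝ), 0 ≤ f x)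
    (hconv : ∀ x ∈ Set.Ici (0:ℝ), ∀ y ∈ Set.Ici (0:ℝ), ∀ t ∈ Set.Icc (0:ℝ) 1,
      f (t * x + (1 - t) * y) ≤ h t ^ s * f x + h (1 - t) ^ s * f y)
    (ha : 0 ≤ a) (hab : a < b)
    (hfint : IntegrableOn f (Set.Icc a b))
    (hhint : IntegrableOn (fun t => h t ^ s) (Set.Icc (0:ℝ) 1)) :
    (1 / (2 * h (1/2) ^ s)) * f ((a + b) / 2) ≤ (1 / (b - a)) * ∫ x in a..b, f x ∧
    (1 / (b - a)) * ∫ x in a..b, f x ≤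
      ((f a + f b) / 2) * ∫ t in (0:ℝ)..1, (h t ^ s + h (1 - t) ^ s) := by
  have hba : (0:ℝ) < b - a := sub_pos.mpr hab
  have hb : (0 : ℝ) ≤ b := ha.trans hab.le
  have hC : (0:ℝ) < h (1/2) ^ s := Real.rpow_pos_of_pos hhalf s
  set C := h (1/2) ^ s with hCdef
  -- interval integrability of f
  have hfI : IntervalIntegrable f volume a b := by
    rw [intervalIntegrable_iff_integrableOn_Icc_of_le hab.le]; exact hfint
  have hfI' : IntervalIntegrable (fun x => f (a + b - x)) volume a b := by
    have := hfI.comp_sub_left (a + b)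
    exact (by simpa using this : IntervalIntegrable _ volume b a).symm
  have hhI : IntervalIntegrable (fun t => h t ^ s) volume 0 1 := by
    rw [intervalIntegrable_iff_integrableOn_Icc_of_le zero_le_one]; exact hhint
  have hhI' : IntervalIntegrable (fun t => h (1 - t) ^ s) volume 0 1 := by
    have := (hhI.comp_sub_left 1)
    exact (by simpa using this : IntervalIntegrable _ volume 1 0).symm
  set J := ∫ x in a..b, f x with hJdef
  -- reflection identity for f
  have hrefl : (∫ x in a..b, f (a + b - x)) = J := by
    rw [intervalIntegral.integral_comp_sub_left f (a + b)]
    simp [hJdef]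
  -- left inequality
  have hleft : (b - a) * f ((a + b) / 2) ≤ C * (2 * J) := by
    have hmono : (∫ x in a..b, f ((a + b) / 2)) ≤
        ∫ x in a..b, (C * f x + C * f (a + b - x)) := by
      apply intervalIntegral.integral_mono_on hab.le
      · exact intervalIntegrable_const
      · exact (hfI.const_mul C).add (hfI'.const_mul C)
      · intro x hx
        have hx0 : x ∈ Set.Ici (0:ℝ) := le_trans ha hx.1
        have hx1 : a + b - x ∈ Set.Ici (0:ℝ) := by
          have : x ≤ b := hx.2
          simp only [Set.mem_Ici]; linarith
        have ht : (1/2 : ℝ) ∈ Set.Icc (0:ℝ) 1 := by norm_num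
        have := hconv x hx0 (a + b - x) hx1 (1/2) ht
        have heq : (1/2 : ℝ) * x + (1 - 1/2) * (a + b - x) = (a + b) / 2 := by ring
        rw [heq] at this
        have h12 : (1:ℝ) - 1/2 = 1/2 := by norm_num
        rw [h12] at this
        linarith [this]
    rw [intervalIntegral.integral_const] at hmono
    rw [intervalIntegral.integral_add (hfI.const_mul C) (hfI'.const_mul C),
      intervalIntegral.integral_const_mul, intervalIntegral.integral_const_mul, hrefl] at hmono
    simp only [smul_eq_mul] at hmono
    linarith
  -- right inequality setup: substitution
  have hsubst : (∫ t in (0:ℝ)..1, f ((b - a) * t + a)) = (b - a)⁻¹ * J := by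
    rw [intervalIntegral.integral_comp_mul_add f (ne_of_gt hba) a]
    simp [hJdef]
  have hgI : IntervalIntegrable (fun t => f ((b - a) * t + a)) volume 0 1 := by
    have h1 : IntervalIntegrable (fun x => f (x + a)) volume 0 (b - a) := by
      simpa using hfI.comp_add_right a
    have := h1.comp_mul_left (c := b - a)
    simpa [div_self (ne_of_gt hba)] using this
  set I := ∫ t in (0:ℝ)..1, h t ^ s with hIdef
  have hreflh : (∫ t in (0:ℝ)..1, h (1 - t) ^ s) = I := by
    rw [intervalIntegral.integral_comp_sub_left (fun u => h u ^ s) 1]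
    simp [hIdef]
  have hright : (∫ t in (0:ℝ)..1, f ((b - a) * t + a)) ≤ f b * I + f a * I := by
    have hmono : (∫ t in (0:ℝ)..1, f ((b - a) * t + a)) ≤
        ∫ t in (0:ℝ)..1, (h t ^ s * f b + h (1 - t) ^ s * f a) := by
      apply intervalIntegral.integral_mono_on zero_le_one hgI
      · exact (hhI.mul_const (f b)).add (hhI'.mul_const (f a))
      · intro t htm
        have := hconv b (Set.mem_Ici.mpr hb) a (Set.mem_Ici.mpr ha) t htm
        have heq : t * b + (1 - t) * a = (b - a) * t + a := by ring
        rw [heq] at this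
        exact this
    rw [intervalIntegral.integral_add (hhI.mul_const (f b)) (hhI'.mul_const (f a)),
      intervalIntegral.integral_mul_const, intervalIntegral.integral_mul_const, hreflh] at hmono
    linarith
  have hsum : (∫ t in (0:ℝ)..1, (h t ^ s + h (1 - t) ^ s)) = 2 * I := by
    rw [intervalIntegral.integral_add hhI hhI', hreflh]; ring
  constructor
  · rw [div_mul_eq_mul_div, div_mul_eq_mul_div, div_le_div_iff₀ (by positivity) hba]
    calc 1 * f ((a + b) / 2) * (b - a) = (b - a) * f ((a + b) / 2) := by ring
      _ ≤ C * (2 * J) := hleft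
      _ = 1 * J * (2 * C) := by ring
  · rw [hsum]
    have : (1 / (b - a)) * J = (b - a)⁻¹ * J := by rw [one_div]
    rw [this, ← hsubst]
    calc (∫ t in (0:ℝ)..1, f ((b - a) * t + a)) ≤ f b * I + f a * I := hright
      _ = (f a + f b) / 2 * (2 * I) := by ring
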